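/- Target-shift lower bound: let μ₊ and μ₋ be probability measures on X, and for p' ∈ [0,1] let D(p') := p'·(μ₊ ⊗ δ_{+1}) + (1−p')·(μ₋ ⊗ δ_{−1}) be the corresponding data distribution on X × {−1,+1}. Let h : X → {−1,+1} be a measurable classifier with true positive rate TPR := μ₊({x : h(x) = +1}) and false positive rate FPR := μ₋({x : h(x) = +1}). Then for any source prior p ∈ [0,1] and induced prior q ∈ [0,1]: max{ err_{D(p)}(h), err_{D(q)}(h) } ≥ |p − q| · (1 − |TPR − FPR|) / 2. -/

import Mathlib

open MeasureTheory

/-- Classification error of classifier `h` (labels encoded as `Bool`, `true = +1`,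
`false = -1`) on a data distribution `D` over `X × Bool`. -/
noncomputable def err {X : Type*} [MeasurableSpace X]
    (D : Measure (X × Bool)) (h : X → Bool) : ℝ :=
  (D {p : X × Bool | h p.1 ≠ p.2}).toReal

/-- The target-shift family of data distributions: with class-conditional feature
distributions `μ₊` (for label `+1 = true`) and `μ₋` (for label `−1 = false`) and
positive-label prior `p'`, the data distribution is the mixture
`p' · (μ₊ ⊗ δ_{+1}) + (1 − p') · (μ₋ ⊗ δ_{−1})`. -/
noncomputable def targetShiftD {X : Type*} [MeasurableSpace X]
    (μp μn : Measure X) (p' : ℝ) : Measure (X × Bool) :=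
  (ENNReal.ofReal p') • (μp.prod (Measure.dirac true)) +
    (ENNReal.ofReal (1 - p')) • (μn.prod (Measure.dirac false))

lemma err_formula {X : Type*} [MeasurableSpace X]
    (μp μn : Measure X) [IsProbabilityMeasure μp] [IsProbabilityMeasure μn]
    (h : X → Bool) (hmeas : Measurable h) (p' : ℝ) (h0 : 0 ≤ p') (h1 : p' ≤ 1) :
    err (targetShiftD μp μn p') h =
      p' * (μp {x | h x = false}).toReal + (1 - p') * (μn {x | h x = true}).toReal := by
  have hS : MeasurableSet {pr : X × Bool | h pr.1 ≠ pr.2} := by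
    have : MeasurableSet {pr : X × Bool | h pr.1 = pr.2} :=
      measurableSet_eq_fun (hmeas.comp measurable_fst) measurable_snd
    simpa [Set.compl_setOf] using this.compl
  have e1 : (μp.prod (Measure.dirac true)) {pr : X × Bool | h pr.1 ≠ pr.2}
      = μp {x | h x = false} := by
    rw [Measure.prod_dirac, Measure.map_apply (measurable_prodMk_right) hS]
    congr 1
    ext x
    simp [Set.mem_preimage]
  have e2 : (μn.prod (Measure.dirac false)) {pr : X × Bool | h pr.1 ≠ pr.2}
      = μn {x | h x = true} := by
    rw [Measure.prod_dirac, Measure.map_apply (measurable_prodMk_right) hS]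
    congr 1
    ext x
    simp [Set.mem_preimage]
  have fin1 : μp {x | h x = false} ≠ ⊤ := (measure_lt_top _ _).ne
  have fin2 : μn {x | h x = true} ≠ ⊤ := (measure_lt_top _ _).ne
  unfold err targetShiftD
  rw [Measure.add_apply, Measure.smul_apply, Measure.smul_apply, smul_eq_mul,
    smul_eq_mul, e1, e2, ENNReal.toReal_add, ENNReal.toReal_mul, ENNReal.toReal_mul,
    ENNReal.toReal_ofReal h0, ENNReal.toReal_ofReal (by linarith : (0:ℝ) ≤ 1 - p')]
  · exact ENNReal.mul_ne_top ENNReal.ofReal_ne_top fin1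
  · exact ENNReal.mul_ne_top ENNReal.ofReal_ne_top fin2

/-- Target-shift lower bound: for any classifier `h` with true positive rate
`TPR = μ₊({h = +1})` and false positive rate `FPR = μ₋({h = +1})`, and any source prior
`p` and induced prior `q`:
`max{err_{D(p)}(h), err_{D(q)}(h)} ≥ |p − q| · (1 − |TPR − FPR|) / 2`. -/
theorem target_shift_lower_bound
    {X : Type*} [MeasurableSpace X]
    (μp μn : Measure X) [IsProbabilityMeasure μp] [IsProbabilityMeasure μn]
    (h : X → Bool) (hmeas : Measurable h)
    (p q : ℝ) (hp : p ∈ Set.Icc (0 : ℝ) 1) (hq : q ∈ Set.Icc (0 : ℝ) 1) :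
    max (err (targetShiftD μp μn p) h) (err (targetShiftD μp μn q) h) ≥
      |p - q| *
        (1 - |(μp {x | h x = true}).toReal - (μn {x | h x = true}).toReal|) / 2 := by
  obtain ⟨hp0, hp1⟩ := hp
  obtain ⟨hq0, hq1⟩ := hq
  rw [err_formula μp μn h hmeas p hp0 hp1, err_formula μp μn h hmeas q hq0 hq1]
  set a : ℝ := (μp {x | h x = false}).toReal with ha
  set b : ℝ := (μn {x | h x = true}).toReal with hb
  have hcompl : (μp {x | h x = true}).toReal = 1 - a := by
    have hmset : MeasurableSet {x | h x = true} := hmeas (measurableSet_singleton true)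
    have : μp {x | h x = true} + μp {x | h x = false} = 1 := by
      have := measure_add_measure_compl (μ := μp) hmset
      simpa [Set.compl_setOf] using this
    have fin1 : μp {x | h x = true} ≠ ⊤ := (measure_lt_top _ _).ne
    have fin2 : μp {x | h x = false} ≠ ⊤ := (measure_lt_top _ _).ne
    have := congrArg ENNReal.toReal this
    rw [ENNReal.toReal_add fin1 fin2] at this
    simp at this
    linarith [this]
  rw [hcompl]
  have ha0 : 0 ≤ a := ENNReal.toReal_nonneg
  have ha1 : a ≤ 1 := by
    rw [ha]
    exact ENNReal.toReal_le_of_le_ofReal zero_le_one (by simpa using prob_le_one)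
  have hb0 : 0 ≤ b := ENNReal.toReal_nonneg
  have hb1 : b ≤ 1 := by
    rw [hb]
    exact ENNReal.toReal_le_of_le_ofReal zero_le_one (by simpa using prob_le_one)
  have key1 : p * a + (1 - p) * b ≤ max (p * a + (1 - p) * b) (q * a + (1 - q) * b) :=
    le_max_left _ _
  have key2 : q * a + (1 - q) * b ≤ max (p * a + (1 - p) * b) (q * a + (1 - q) * b) :=
    le_max_right _ _
  rcases abs_cases (p - q) with ⟨e1, e2⟩ | ⟨e1, e2⟩ <;>
    rcases abs_cases ((1 - a) - b) with ⟨f1, f2⟩ | ⟨f1, f2⟩ <;>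
    rw [e1, f1] <;>
    nlinarith [mul_nonneg ha0 hb0, mul_nonneg hp0 ha0, mul_nonneg hq0 hb0,
      mul_nonneg hp0 hb0, mul_nonneg hq0 ha0,
      mul_nonneg (sub_nonneg.2 hp1) hb0, mul_nonneg (sub_nonneg.2 hq1) hb0,
      mul_nonneg (sub_nonneg.2 hp1) ha0, mul_nonneg (sub_nonneg.2 hq1) ha0]
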